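/- For integers t ≥ 5 and t ≤ k ≤ t + 1, there exists an edge-coloring of K_{t,t} = G(U,V) with exactly k colors containing no rainbow K_{1,3} and no monochromatic K_{1,t}: partition U and V into k−1 nonempty parts U_1,…,U_{k−1} and V_1,…,V_{k−1}, color all edges between U_i and V_i with color i for i ∈ [k−1], and all remaining edges with color k. -/

import Mathlib

open Function Finset SimpleGraph

/-- A rainbow path on 4 vertices `u₁ v₁ u₂ v₂` (middle pattern). -/
def rbP4pat {N : ℕ} {γ : Type*} (c : Fin N → Fin N → γ) : Prop :=
  ∃ u₁ u₂ v₁ v₂ : Fin N, u₁ ≠ u₂ ∧ v₁ ≠ v₂ ∧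
    c u₁ v₁ ≠ c u₂ v₁ ∧ c u₁ v₁ ≠ c u₂ v₂ ∧ c u₂ v₁ ≠ c u₂ v₂

/-- The coloring `c` of `K_{N,N}` contains a rainbow path on 4 vertices. -/
def hasRainbowP4 {N : ℕ} {γ : Type*} (c : Fin N → Fin N → γ) : Prop :=
  rbP4pat c ∨ rbP4pat (fun v u => c u v)

/-- A rainbow path on 5 vertices `u₁ v₁ u₂ v₂ u₃` (one-sided pattern). -/
def rbP5pat {N : ℕ} {γ : Type*} (c : Fin N → Fin N → γ) : Prop :=
  ∃ u₁ u₂ u₃ v₁ v₂ : Fin N, u₁ ≠ u₂ ∧ u₁ ≠ u₃ ∧ u₂ ≠ u₃ ∧ v₁ ≠ v₂ ∧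
    c u₁ v₁ ≠ c u₂ v₁ ∧ c u₁ v₁ ≠ c u₂ v₂ ∧ c u₁ v₁ ≠ c u₃ v₂ ∧
    c u₂ v₁ ≠ c u₂ v₂ ∧ c u₂ v₁ ≠ c u₃ v₂ ∧ c u₂ v₂ ≠ c u₃ v₂

/-- The coloring `c` of `K_{N,N}` contains a rainbow path on 5 vertices. -/
def hasRainbowP5 {N : ℕ} {γ : Type*} (c : Fin N → Fin N → γ) : Prop :=
  rbP5pat c ∨ rbP5pat (fun v u => c u v)

/-- The coloring `c` of `K_{N,N}` contains a rainbow star `K_{1,3}`: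
some vertex (on either side) has three incident edges with pairwise distinct colors. -/
def hasRainbowK13 {N : ℕ} {γ : Type*} (c : Fin N → Fin N → γ) : Prop :=
  (∃ u v₁ v₂ v₃ : Fin N, c u v₁ ≠ c u v₂ ∧ c u v₁ ≠ c u v₃ ∧ c u v₂ ≠ c u v₃) ∨
  (∃ v u₁ u₂ u₃ : Fin N, c u₁ v ≠ c u₂ v ∧ c u₁ v ≠ c u₃ v ∧ c u₂ v ≠ c u₃ v)

/-- The coloring `c` of `K_{N,N}` (first coordinate: side `U`, second: side `V`)
contains a monochromatic copy of the (bipartite) graph `H`. -/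
def hasMonoCopy {N : ℕ} {γ : Type*} {α : Type*} (c : Fin N → Fin N → γ)
    (H : SimpleGraph α) : Prop :=
  ∃ i : γ, ∃ f : α → Fin N ⊕ Fin N, Function.Injective f ∧
    ∀ a b, H.Adj a b → ∃ u v : Fin N, c u v = i ∧
      ((f a = Sum.inl u ∧ f b = Sum.inr v) ∨ (f a = Sum.inr v ∧ f b = Sum.inl u))

/-- The coloring `c` of `K_{N,N}` contains a monochromatic copy of `K_{s,t}`
(in either orientation with respect to the two sides). -/
def hasMonoKst {N : ℕ} {γ : Type*} (c : Fin N → Fin N → γ) (s t : ℕ) : Prop :=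
  ∃ i : γ, ∃ S T : Finset (Fin N),
    ((S.card = s ∧ T.card = t) ∨ (S.card = t ∧ T.card = s)) ∧
    ∀ u ∈ S, ∀ v ∈ T, c u v = i

/-- Disjoint union of a family of graphs, on the sigma type. -/
def sigmaUnion {ι : Type*} {β : ι → Type*} (G : ∀ i, SimpleGraph (β i)) :
    SimpleGraph (Σ i, β i) where
  Adj x y := ∃ i a b, (G i).Adj a b ∧ x = ⟨i, a⟩ ∧ y = ⟨i, b⟩
  symm := by constructor; rintro x y ⟨i, a, b, h, rfl, rfl⟩; exact ⟨i, b, a, h.symm, rfl, rfl⟩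
  loopless := by
    constructor
    rintro x ⟨i, a, b, h, rfl, h2⟩
    obtain rfl : a = b := by simpa using h2
    exact (G i).loopless.irrefl a h


/-- for `t ≥ 5` and `t ≤ k ≤ t + 1`, there is an exact `k`-coloring of
`K_{t,t}` with no rainbow `K_{1,3}` and no monochromatic `K_{1,t}`: partition both
sides into `k−1` nonempty parts, color edges inside the `i`-th pair `(U_i, V_i)` with
color `i`, and all remaining edges with color `k`. -/
theorem stmt15 (k t : ℕ) (ht : 5 ≤ t) (hk1 : t ≤ k) (hk2 : k ≤ t + 1) :
    ∃ c : Fin t → Fin t → ℕ, ∃ pU pV : Fin t → ℕ,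
      (∀ x, pU x ∈ Finset.Icc 1 (k - 1)) ∧ (∀ y, pV y ∈ Finset.Icc 1 (k - 1)) ∧
      (∀ i ∈ Finset.Icc 1 (k - 1), (∃ x, pU x = i) ∧ (∃ y, pV y = i)) ∧
      (∀ x y, c x y = if pU x = pV y then pU x else k) ∧
      ((Finset.univ ×ˢ Finset.univ).image (fun p : Fin t × Fin t => c p.1 p.2)
        = Finset.Icc 1 k) ∧
      ¬ hasRainbowK13 c ∧ ¬ hasMonoKst c 1 t := by
  have hK1 : 4 ≤ k - 1 := by omega
  have hK2 : k - 1 ≤ t := by omega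
  have hKk : k - 1 < k := by omega
  set K := k - 1 with hKdef
  set p : Fin t → ℕ := fun x => min (x.1 + 1) K with hp
  have hpmem : ∀ x : Fin t, 1 ≤ p x ∧ p x ≤ K := by
    intro x; simp only [hp]; omega
  refine ⟨fun x y => if p x = p y then p x else k, p, p, ?_, ?_, ?_,
    fun x y => rfl, ?_, ?_, ?_⟩
  · intro x; simp only [Finset.mem_Icc]; exact hpmem x
  · intro x; simp only [Finset.mem_Icc]; exact hpmem x
  · intro i hi
    simp only [Finset.mem_Icc] at hi
    have hx : i - 1 < t := by omega
    have : p ⟨i - 1, hx⟩ = i := by simp only [hp]; omega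
    exact ⟨⟨_, this⟩, ⟨_, this⟩⟩
  · ext a
    simp only [Finset.mem_image, Finset.mem_product, Finset.mem_univ, true_and,
      Finset.mem_Icc, Prod.exists]
    constructor
    · rintro ⟨x, y, h⟩
      have h1 := hpmem x
      split at h <;> omega
    · rintro ⟨h1, h2⟩
      by_cases ha : a ≤ K
      · have hx : a - 1 < t := by omega
        have hpa : p ⟨a - 1, hx⟩ = a := by simp only [hp]; omega
        exact ⟨⟨a - 1, hx⟩, ⟨a - 1, hx⟩, by simp [hpa]⟩
      · have hak : a = k := by omega
        have h0 : (0 : ℕ) < t := by omega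
        have h1t : (1 : ℕ) < t := by omega
        refine ⟨⟨0, h0⟩, ⟨1, h1t⟩, ?_⟩
        have e0 : p ⟨0, h0⟩ = 1 := by simp only [hp]; omega
        have e1 : p ⟨1, h1t⟩ = 2 := by simp only [hp]; omega
        rw [e0, e1]; simp [hak]
  · intro h
    have key : ∀ a b : Fin t, (if p a = p b then p a else k) = p a ∨
        (if p a = p b then p a else k) = k := by
      intro a b; split <;> simp
    rcases h with ⟨u, v₁, v₂, v₃, h12, h13, h23⟩ | ⟨v, u₁, u₂, u₃, h12, h13, h23⟩
    · simp only at h12 h13 h23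
      rcases key u v₁ with e1 | e1 <;> rcases key u v₂ with e2 | e2 <;>
        rcases key u v₃ with e3 | e3 <;> omega
    · simp only at h12 h13 h23
      have key2 : ∀ a b : Fin t, (if p a = p b then p a else k) = p b ∨
          (if p a = p b then p a else k) = k := by
        intro a b; split <;> simp_all
      rcases key2 u₁ v with e1 | e1 <;> rcases key2 u₂ v with e2 | e2 <;>
        rcases key2 u₃ v with e3 | e3 <;> omega
  · rintro ⟨i, S, T, hcard, hall⟩
    have main : ∀ q : ℕ, 1 ≤ q → q ≤ K →
        (∀ v : Fin t, (if q = p v then q else k) = i) → False := by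
      intro q hq1 hq2 hc
      have hx1 : q - 1 < t := by omega
      have e1 : p ⟨q - 1, hx1⟩ = q := by simp only [hp]; omega
      have c1 := hc ⟨q - 1, hx1⟩
      rw [e1] at c1
      rw [if_pos rfl] at c1
      by_cases hq : q = 1
      · have h1t : (1 : ℕ) < t := by omega
        have e2 : p ⟨1, h1t⟩ = 2 := by simp only [hp]; omega
        have c2 := hc ⟨1, h1t⟩
        rw [e2] at c2
        rw [if_neg (by omega)] at c2
        omega
      · have h0 : (0 : ℕ) < t := by omega
        have e2 : p ⟨0, h0⟩ = 1 := by simp only [hp]; omega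
        have c2 := hc ⟨0, h0⟩
        rw [e2] at c2
        rw [if_neg (by omega)] at c2
        omega
    rcases hcard with ⟨hS, hT⟩ | ⟨hS, hT⟩
    · have hTu : T = Finset.univ := Finset.eq_univ_of_card T (by simpa using hT)
      obtain ⟨u, hu⟩ := Finset.card_eq_one.mp hS
      have hc : ∀ v : Fin t, (if p u = p v then p u else k) = i := by
        intro v
        exact hall u (by simp [hu]) v (by simp [hTu])
      exact main (p u) (hpmem u).1 (hpmem u).2 hc
    · have hSu : S = Finset.univ := Finset.eq_univ_of_card S (by simpa using hS)
      obtain ⟨v, hv⟩ := Finset.card_eq_one.mp hT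
      have hc : ∀ u : Fin t, (if p v = p u then p v else k) = i := by
        intro u
        have := hall u (by simp [hSu]) v (by simp [hv])
        simp only at this
        rcases eq_or_ne (p u) (p v) with he | he
        · rw [if_pos he.symm]; rw [if_pos he, he] at this; exact this
        · rw [if_neg he.symm]; rw [if_neg he] at this; exact this
      exact main (p v) (hpmem v).1 (hpmem v).2 hc
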